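/- Let $\mathfrak{g}$ be a compact semisimple real Lie algebra, $\mathfrak{r} \subseteq \mathfrak{g}$ a subalgebra, and $\mathfrak{q} \subseteq \mathfrak{r}$ a simple subalgebra such that $B_{\mathfrak{q}} = \alpha \cdot B_{\mathfrak{r}}|_{\mathfrak{q}}$ for some real $\alpha$, where $B$ denotes Killing forms. Let $\{f_j\}_{j=1}^{\dim \mathfrak{q}}$ be a basis of $\mathfrak{q}$ orthonormal with respect to $-B_{\mathfrak{r}}$. Then for each $i$, $\sum_{j,k=1}^{\dim\mathfrak{q}} \big(-B_{\mathfrak{r}}([f_i,f_j],f_k)\big)^2 = \alpha$, and consequently $\sum_{i,j,k=1}^{\dim\mathfrak{q}} \big(-B_{\mathfrak{r}}([f_i,f_j],f_k)\big)^2 = \alpha \cdot \dim \mathfrak{q}$. -/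

import Mathlib

theorem stmt_14 (g : Type*) [LieRing g] [LieAlgebra ℝ g] [Module.Finite ℝ g]
    [LieAlgebra.IsSemisimple ℝ g]
    (hcompact : ∀ X : g, X ≠ 0 → killingForm ℝ g X X < 0)
    (r : LieSubalgebra ℝ g) (q : LieSubalgebra ℝ ↥r)
    (hq : LieAlgebra.IsSimple ℝ ↥q) (α : ℝ)
    (hα : ∀ X Y : ↥q, killingForm ℝ ↥q X Y = α * killingForm ℝ ↥r (X : ↥r) (Y : ↥r))
    (f : Fin (Module.finrank ℝ ↥q) → ↥q)
    (hbasis : ∃ B : Module.Basis (Fin (Module.finrank ℝ ↥q)) ℝ ↥q, ⇑B = f)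
    (horth : ∀ i j, -killingForm ℝ ↥r (f i : ↥r) (f j : ↥r) = if i = j then 1 else 0) :
    (∀ i, ∑ j, ∑ k, (-killingForm ℝ ↥r ((⁅f i, f j⁆ : ↥q) : ↥r) (f k : ↥r))^2 = α) ∧
    (∑ i, ∑ j, ∑ k, (-killingForm ℝ ↥r ((⁅f i, f j⁆ : ↥q) : ↥r) (f k : ↥r))^2
      = α * Module.finrank ℝ ↥q) := by
  obtain ⟨B, hB⟩ := hbasis
  -- coordinates via the bilinear form
  have hrepr : ∀ (v : ↥q) j, B.repr v j = -killingForm ℝ ↥r (v : ↥r) (f j : ↥r) := by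
    intro v j
    have hmap : (B.coord j : ↥q →ₗ[ℝ] ℝ)
        = -((killingForm ℝ ↥r).flip (f j : ↥r) ∘ₗ q.toSubmodule.subtype) := by
      apply B.ext
      intro i
      simp only [Module.Basis.coord_apply, Module.Basis.repr_self, Finsupp.single_apply,
        LinearMap.neg_apply, LinearMap.comp_apply, Submodule.subtype_apply,
        LinearMap.flip_apply]
      rw [hB, ← horth i j]
      rfl
    have := congrArg (fun φ : ↥q →ₗ[ℝ] ℝ => φ v) hmap
    simp at this
    exact this
  -- expansion of the coercion
  have hcoe : ∀ v : ↥q, (v : ↥r) = ∑ i, B.repr v i • (f i : ↥r) := by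
    intro v
    conv_lhs => rw [← B.sum_repr v]
    rw [← hB]
    push_cast
    rfl
  -- Parseval
  have hpars : ∀ v : ↥q, ∑ k, (-killingForm ℝ ↥r (v : ↥r) (f k : ↥r))^2
      = -killingForm ℝ ↥r (v : ↥r) (v : ↥r) := by
    intro v
    conv_rhs => rw [show (killingForm ℝ ↥r (v : ↥r)) (v : ↥r)
      = (killingForm ℝ ↥r (v : ↥r)) (∑ k, B.repr v k • (f k : ↥r)) by rw [← hcoe]]
    rw [map_sum, ← Finset.sum_neg_distrib]
    refine Finset.sum_congr rfl fun k _ => ?_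
    rw [map_smul, smul_eq_mul, hrepr v k]
    ring
  -- trace formula for the Killing form of q
  have htr : ∀ X : ↥q, killingForm ℝ ↥q X X
      = ∑ j, B.repr ⁅X, ⁅X, f j⁆⁆ j := by
    intro X
    rw [killingForm_apply_apply, LinearMap.trace_eq_matrix_trace ℝ B, Matrix.trace]
    refine Finset.sum_congr rfl fun j _ => ?_
    simp [Matrix.diag, LinearMap.toMatrix_apply, LieAlgebra.ad_apply, hB]
  have key : ∀ i, ∑ j, ∑ k,
      (-killingForm ℝ ↥r ((⁅f i, f j⁆ : ↥q) : ↥r) (f k : ↥r))^2 = α := by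
    intro i
    have h1 : ∑ j, ∑ k, (-killingForm ℝ ↥r ((⁅f i, f j⁆ : ↥q) : ↥r) (f k : ↥r))^2
        = ∑ j, -killingForm ℝ ↥r ((⁅f i, f j⁆ : ↥q) : ↥r) ((⁅f i, f j⁆ : ↥q) : ↥r) :=
      Finset.sum_congr rfl fun j _ => hpars _
    have h2 : killingForm ℝ ↥q (f i) (f i)
        = ∑ j, killingForm ℝ ↥r ((⁅f i, f j⁆ : ↥q) : ↥r) ((⁅f i, f j⁆ : ↥q) : ↥r) := by
      rw [htr (f i)]
      refine Finset.sum_congr rfl fun j _ => ?_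
      rw [hrepr]
      rw [show ((⁅f i, ⁅f i, f j⁆⁆ : ↥q) : ↥r) = ⁅(f i : ↥r), ((⁅f i, f j⁆ : ↥q) : ↥r)⁆
        from LieSubalgebra.coe_bracket q _ _]
      rw [show killingForm ℝ ↥r = LieModule.traceForm ℝ ↥r ↥r from rfl,
        LieModule.traceForm_apply_lie_apply', neg_neg,
        ← LieSubalgebra.coe_bracket q (f i) (f j)]
    have h3 : killingForm ℝ ↥q (f i) (f i) = -α := by
      rw [hα]
      have h := horth i i
      rw [if_pos rfl] at h
      have h' : killingForm ℝ ↥r (f i : ↥r) (f i : ↥r) = -1 := by linarith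
      rw [h']; ring
    have := h2.symm.trans h3
    rw [h1, Finset.sum_neg_distrib, this, neg_neg]
  refine ⟨key, ?_⟩
  calc ∑ i, ∑ j, ∑ k, (-killingForm ℝ ↥r ((⁅f i, f j⁆ : ↥q) : ↥r) (f k : ↥r))^2
      = ∑ _i : Fin (Module.finrank ℝ ↥q), α := Finset.sum_congr rfl fun i _ => key i
    _ = α * Module.finrank ℝ ↥q := by
        simp [Finset.sum_const, mul_comm]
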